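/- Let R be a discrete valuation ring with maximal ideal p and A a local order over R with maximal ideal m. If A is tame at p (i.e., A/pA is a tame algebra over R/p), then the intersection pA^† ∩ A equals m. -/

import Mathlib

/-- The algebra structure of `A ⧸ pA` over `R ⧸ p` induced by `algebraMap R A`. -/
noncomputable instance quotMapAlgebra {R A : Type*} [CommRing R] [CommRing A] [Algebra R A]
    (p : Ideal R) : Algebra (R ⧸ p) (A ⧸ Ideal.map (algebraMap R A) p) :=
  (Ideal.quotientMap _ (algebraMap R A) Ideal.le_comap_map).toAlgebra

/-- A finite commutative algebra `A` over a field `k` is tame if the radical of the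
trace form equals the nilradical.  (Stated for a commutative base ring; in applications the base is the residue field `R ⧸ p`, which is a field.) -/
def IsTameOver (k A : Type*) [CommRing k] [CommRing A] [Algebra k A] : Prop :=
  {x : A | ∀ y : A, Algebra.trace k A (x * y) = 0} = (nilradical A : Set A)

/-- Let `R` be a DVR with maximal ideal `p` and `A` a local order over `R` with maximal
ideal `m`, with total quotient ring `QA` (finite étale over `Q(R)`).  If `A` is tame at
`p` (i.e. `A/pA` is tame over `R/p`), then `p·A^† ∩ A = m` inside `QA`. -/
theorem tame_smul_traceDual_inter_eq_maximalIdeal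
    (R : Type*) [CommRing R] [IsDomain R] [IsDiscreteValuationRing R]
    (A : Type*) [CommRing A] [Nontrivial A] [IsLocalRing A] [Algebra R A]
    [Module.Finite R A] [NoZeroSMulDivisors R A]
    (QA : Type*) [CommRing QA] [Algebra A QA] [Algebra R QA] [IsScalarTower R A QA]
    [Algebra (FractionRing R) QA] [IsScalarTower R (FractionRing R) QA]
    [IsLocalization (Algebra.algebraMapSubmonoid A (nonZeroDivisors R)) QA]
    [Module.Finite (FractionRing R) QA]
    (hEt : (Algebra.traceForm (FractionRing R) QA).Nondegenerate)
    (htame : IsTameOver (R ⧸ IsLocalRing.maximalIdeal R)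
      (A ⧸ Ideal.map (algebraMap R A) (IsLocalRing.maximalIdeal R))) :
    {y : QA | (∃ r ∈ IsLocalRing.maximalIdeal R, ∃ x : QA,
        (∀ a : A, Algebra.trace (FractionRing R) QA (x * algebraMap A QA a) ∈
          Set.range (algebraMap R (FractionRing R))) ∧ y = r • x) ∧
      y ∈ Set.range (algebraMap A QA)} =
    algebraMap A QA '' (IsLocalRing.maximalIdeal A) := by
  classical
  let K := FractionRing R
  let p := IsLocalRing.maximalIdeal R
  let pA := Ideal.map (algebraMap R A) p
  -- trace compatibility with localization
  have key : ∀ z : A, Algebra.trace K QA (algebraMap A QA z)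
      = algebraMap R K (Algebra.trace R A z) := fun z =>
    Algebra.trace_localization R (nonZeroDivisors R) z
  -- pA is contained in the maximal ideal of A, and the quotient is nontrivial and local
  have hcm : (IsLocalRing.maximalIdeal A).comap (algebraMap R A) = p :=
    IsLocalRing.eq_maximalIdeal
      (Ideal.isMaximal_comap_of_isIntegral_of_isMaximal (IsLocalRing.maximalIdeal A))
  have hpm : pA ≤ IsLocalRing.maximalIdeal A :=
    Ideal.map_le_iff_le_comap.mpr hcm.ge
  have hpAne : pA ≠ ⊤ := fun h =>
    (IsLocalRing.maximalIdeal.isMaximal A).ne_top (top_le_iff.mp (h ▸ hpm))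
  haveI : Nontrivial (A ⧸ pA) := Ideal.Quotient.nontrivial_iff.mpr hpAne
  haveI : IsLocalRing (A ⧸ pA) :=
    IsLocalRing.of_surjective' (Ideal.Quotient.mk pA) Ideal.Quotient.mk_surjective
  have hAlg : quotMapAlgebra (A := A) (IsLocalRing.maximalIdeal R) =
      Ideal.Quotient.algebraQuotientMapQuotient := Algebra.algebra_ext _ _ (fun _ => rfl)
  -- characterization via tameness
  have hchar : ∀ z : A, (∀ c : A, Algebra.trace R A (z * c) ∈ p) ↔
      (Ideal.Quotient.mk pA z ∈ nilradical (A ⧸ pA)) := by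
    intro z
    have hset := Set.ext_iff.mp htame (Ideal.Quotient.mk pA z)
    constructor
    · intro h
      refine hset.mp (fun y => ?_)
      obtain ⟨c, rfl⟩ := Ideal.Quotient.mk_surjective y
      rw [← map_mul, hAlg]
      exact (Algebra.trace_quotient_mk (R := R) (S := A) (z * c)).trans
        (Ideal.Quotient.eq_zero_iff_mem.mpr (h c))
    · intro h c
      have h2 := hset.mpr h (Ideal.Quotient.mk pA c)
      rw [← map_mul, hAlg] at h2
      have h3 := (Algebra.trace_quotient_mk (R := R) (S := A) (z * c)).symm.trans h2
      exact Ideal.Quotient.eq_zero_iff_mem.mp h3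
  ext y
  constructor
  · rintro ⟨⟨r, hr, x, hx, rfl⟩, a, ha⟩
    refine ⟨a, ?_, ha⟩
    by_contra ham
    have hu : IsUnit a := by
      by_contra h
      exact ham (IsLocalRing.mem_maximalIdeal a |>.mpr h)
    have htr : ∀ c : A, Algebra.trace R A (a * c) ∈ p := by
      intro c
      obtain ⟨s, hs⟩ := hx c
      have e1 : algebraMap A QA (a * c) = r • (x * algebraMap A QA c) := by
        rw [map_mul, ha, smul_mul_assoc]
      have e2 : algebraMap R K (Algebra.trace R A (a * c)) = algebraMap R K (r * s) := by
        rw [← key, e1, LinearMap.map_smul_of_tower, ← hs, Algebra.smul_def, ← map_mul]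
      have e3 : Algebra.trace R A (a * c) = r * s := IsFractionRing.injective R K e2
      rw [e3]
      exact Ideal.mul_mem_right s _ hr
    obtain ⟨n, hn⟩ := mem_nilradical.mp ((hchar a).mp htr)
    have hun : IsUnit ((Ideal.Quotient.mk pA a) ^ n) :=
      (hu.map (Ideal.Quotient.mk pA)).pow n
    rw [hn] at hun
    exact zero_ne_one (isUnit_zero_iff.mp hun)
  · rintro ⟨a, ham, rfl⟩
    -- the maximal ideal of A/pA is nilpotent
    letI : Field (R ⧸ p) := Ideal.Quotient.field p
    haveI : Module.Finite R (A ⧸ pA) := Module.Finite.of_surjective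
      (IsScalarTower.toAlgHom R A (A ⧸ pA)).toLinearMap Ideal.Quotient.mk_surjective
    haveI hTower : IsScalarTower R (R ⧸ p) (A ⧸ pA) :=
      IsScalarTower.of_algebraMap_eq (fun _ => rfl)
    haveI : Module.Finite (R ⧸ p) (A ⧸ pA) := Module.Finite.of_restrictScalars_finite R _ _
    haveI : IsArtinian (R ⧸ p) (A ⧸ pA) := inferInstance
    haveI : IsArtinianRing (A ⧸ pA) := isArtinian_of_tower (R ⧸ p) inferInstance
    obtain ⟨n, hn⟩ := IsArtinianRing.isNilpotent_jacobson_bot (R := A ⧸ pA)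
    rw [IsLocalRing.jacobson_eq_maximalIdeal (⊥ : Ideal (A ⧸ pA)) bot_ne_top] at hn
    have hJne : Ideal.map (Ideal.Quotient.mk pA) (IsLocalRing.maximalIdeal A) ≠ ⊤ := by
      intro h
      have h1 : Ideal.Quotient.mk pA 1 ∈
          Ideal.map (Ideal.Quotient.mk pA) (IsLocalRing.maximalIdeal A) := by
        rw [h]; exact Submodule.mem_top
      rw [Ideal.mem_quotient_iff_mem_sup, sup_eq_left.mpr hpm] at h1
      exact (IsLocalRing.maximalIdeal.isMaximal A).ne_top (Ideal.eq_top_of_isUnit_mem _ h1 isUnit_one)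
    have hmem : Ideal.Quotient.mk pA a ∈ IsLocalRing.maximalIdeal (A ⧸ pA) :=
      IsLocalRing.le_maximalIdeal hJne (Ideal.mem_map_of_mem _ ham)
    have hnil : IsNilpotent (Ideal.Quotient.mk pA a) :=
      ⟨n, by simpa [hn] using (Ideal.pow_mem_pow hmem n)⟩
    have htr : ∀ c : A, Algebra.trace R A (a * c) ∈ p :=
      (hchar a).mpr (mem_nilradical.mpr hnil)
    -- choose a uniformizer
    obtain ⟨π, hπirr⟩ := IsDiscreteValuationRing.exists_irreducible R
    have hspan : p = Ideal.span {π} :=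
      (IsDiscreteValuationRing.irreducible_iff_uniformizer π).mp hπirr
    have hπ0 : π ≠ 0 := hπirr.ne_zero
    have hπK : algebraMap R K π ≠ 0 :=
      (map_ne_zero_iff _ (IsFractionRing.injective R K)).mpr hπ0
    have hπp : π ∈ IsLocalRing.maximalIdeal R := by
      show π ∈ p
      rw [hspan]
      exact Ideal.mem_span_singleton_self π
    refine ⟨⟨π, hπp,
      algebraMap K QA (algebraMap R K π)⁻¹ * algebraMap A QA a, ?_, ?_⟩, ⟨a, rfl⟩⟩
    · intro c
      have h1 : algebraMap K QA (algebraMap R K π)⁻¹ * algebraMap A QA a * algebraMap A QA c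
          = (algebraMap R K π)⁻¹ • algebraMap A QA (a * c) := by
        rw [Algebra.smul_def, map_mul, mul_assoc]
      rw [h1, map_smul, key (a * c)]
      have := htr c
      rw [hspan, Ideal.mem_span_singleton] at this
      obtain ⟨s, hs⟩ := this
      refine ⟨s, ?_⟩
      rw [hs, map_mul, smul_eq_mul, ← mul_assoc, inv_mul_cancel₀ hπK, one_mul]
    · rw [Algebra.smul_def, IsScalarTower.algebraMap_apply R K QA, ← mul_assoc, ← map_mul,
        mul_inv_cancel₀ hπK, map_one, one_mul]
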